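/- Let n ≥ 1, let c ≥ 0 and λ₋ > 0 be real constants, let L ∈ ℝ^{n×n} be symmetric with L·𝟙 = 0 and satisfying ⟨v, Lv⟩ ≥ λ₋‖v‖² for all v ∈ ℝⁿ with 𝟙ᵀv = 0, and let P = I − (1/n)𝟙𝟙ᵀ. If X : ℝ → ℝⁿ is differentiable and satisfies X′(t) = −(c·tanh(X(t)) + L·X(t)) for all t ≥ 0 (tanh applied elementwise), then for all t ≥ 0 one has ‖P·X(t)‖² ≤ e^{−2λ₋t}·‖P·X(0)‖². That is, in the noise-free system the fluctuations about the center of mass decay exponentially at rate 2λ₋. -/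

import Mathlib

open Set Filter Real
open scoped Topology

lemma tanh_monotone' : Monotone Real.tanh := by
  intro a b hab
  rw [Real.tanh_eq_sinh_div_cosh, Real.tanh_eq_sinh_div_cosh,
      div_le_div_iff₀ (Real.cosh_pos a) (Real.cosh_pos b)]
  have h : 0 ≤ Real.sinh (b - a) := by
    rw [← Real.sinh_zero, Real.sinh_le_sinh]; linarith
  rw [Real.sinh_sub] at h
  nlinarith

/-- Lemma 1 of the paper: `⟨Px, tanh x⟩ ≥ 0`. -/
lemma proj_tanh_nonneg (n : ℕ) (x : Fin n → ℝ) (m : ℝ) (hm : (∑ i, (x i - m)) = 0) :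
    0 ≤ ∑ i, (x i - m) * Real.tanh (x i) := by
  have key : ∑ i, (x i - m) * Real.tanh (x i)
      = ∑ i, (x i - m) * (Real.tanh (x i) - Real.tanh m) := by
    have expand : ∀ i ∈ Finset.univ, (x i - m) * (Real.tanh (x i) - Real.tanh m)
        = (x i - m) * Real.tanh (x i) - (x i - m) * Real.tanh m := fun i _ => by ring
    rw [Finset.sum_congr rfl expand, Finset.sum_sub_distrib, ← Finset.sum_mul, hm]
    ring
  rw [key]
  apply Finset.sum_nonneg
  intro i _
  rcases le_total m (x i) with h | h
  · exact mul_nonneg (by linarith) (sub_nonneg.2 (tanh_monotone' h))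
  · nlinarith [sub_nonpos.2 (tanh_monotone' h)]

/-- **Exponential synchronization of the noise-free system at rate `2λ₋`.** Let
`c ≥ 0`, `λ₋ > 0`, and let `L` be symmetric with `L𝟙 = 0` and
`⟨v, Lv⟩ ≥ λ₋‖v‖²` for every zero-mean `v` (for a connected graph Laplacian, `λ₋`
is the Fiedler eigenvalue). If `X : ℝ → ℝⁿ` is differentiable and solves
`X′(t) = -(c·tanh(X(t)) + L·X(t))` for all `t ≥ 0` (tanh elementwise), then the
fluctuations about the center of mass satisfy
`‖P·X(t)‖² ≤ e^{-2λ₋t}·‖P·X(0)‖²` for all `t ≥ 0`, where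
`(P·X)ᵢ = Xᵢ - (1/n)∑ⱼ Xⱼ`. -/
theorem noise_free_fluctuations_decay (n : ℕ) (hn : 1 ≤ n) (c : ℝ) (hc : 0 ≤ c)
    (lamMinus : ℝ) (hlam : 0 < lamMinus)
    (L : Matrix (Fin n) (Fin n) ℝ) (hsym : L.IsSymm)
    (hL1 : L.mulVec (fun _ => 1) = 0)
    (hgap : ∀ v : Fin n → ℝ, (∑ i, v i) = 0 →
      lamMinus * (∑ i, (v i) ^ 2) ≤ ∑ i, v i * L.mulVec v i)
    (X : ℝ → Fin n → ℝ)
    (hX : ∀ t : ℝ, 0 ≤ t →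
      HasDerivAt X (-(c • (fun i => Real.tanh (X t i)) + L.mulVec (X t))) t) :
    ∀ t : ℝ, 0 ≤ t →
      ∑ i, (X t i - (∑ j, X t j) / n) ^ 2 ≤
        Real.exp (-(2 * lamMinus * t)) * ∑ i, (X 0 i - (∑ j, X 0 j) / n) ^ 2 := by
  have hn0 : (0:ℝ) < (n:ℝ) := by exact_mod_cast hn
  set D : ℝ → Fin n → ℝ :=
    fun t => -(c • (fun i => Real.tanh (X t i)) + L.mulVec (X t)) with hD
  set Y : ℝ → Fin n → ℝ := fun t i => X t i - (∑ j, X t j) / n with hYdef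
  set f : ℝ → ℝ := fun t => ∑ i, (Y t i) ^ 2 with hfdef
  set g : ℝ → ℝ := fun t => ∑ i, 2 * Y t i * (D t i - (∑ j, D t j) / n) with hgdef
  -- zero mean of Y
  have hYsum : ∀ t, (∑ i, Y t i) = 0 := by
    intro t
    simp only [hYdef, Finset.sum_sub_distrib, Finset.sum_const, Finset.card_univ,
      Fintype.card_fin, nsmul_eq_mul]
    field_simp; ring
  -- derivative of f
  have hderiv : ∀ t, 0 ≤ t → HasDerivAt f (g t) t := by
    intro t ht
    have hXi : ∀ i, HasDerivAt (fun s => X s i) (D t i) t :=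
      fun i => (hasDerivAt_pi.1 (hX t ht)) i
    have hSd : HasDerivAt (fun s => ∑ j, X s j) (∑ j, D t j) t :=
      HasDerivAt.fun_sum fun j _ => hXi j
    have hYi : ∀ i, HasDerivAt (fun s => Y s i) (D t i - (∑ j, D t j) / n) t :=
      fun i => (hXi i).sub (hSd.div_const n)
    have h1 : HasDerivAt f (∑ i, 2 * Y t i * (D t i - (∑ j, D t j) / n)) t := by
      apply HasDerivAt.fun_sum
      intro i _
      have h2 := (hYi i).fun_pow 2
      simpa [pow_one, mul_comm, mul_assoc, mul_left_comm] using h2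
    exact h1
  -- key differential inequality
  have key : ∀ t, 0 ≤ t → g t ≤ -(2 * lamMinus) * f t + 0 := by
    intro t ht
    have hsum0 : ∑ i, Y t i = 0 := hYsum t
    have hg1 : g t = 2 * ∑ i, Y t i * D t i := by
      have expand : ∀ i ∈ Finset.univ, 2 * Y t i * (D t i - (∑ j, D t j) / n)
          = 2 * (Y t i * D t i) - (2 * ((∑ j, D t j) / n)) * Y t i := fun i _ => by ring
      simp only [hgdef]
      rw [Finset.sum_congr rfl expand, Finset.sum_sub_distrib, ← Finset.mul_sum,
        ← Finset.mul_sum, hsum0]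
      ring
    have hsplit : ∑ i, Y t i * D t i
        = -(c * ∑ i, Y t i * Real.tanh (X t i)) - ∑ i, Y t i * L.mulVec (X t) i := by
      have expand : ∀ i ∈ Finset.univ, Y t i * D t i
          = -(c * (Y t i * Real.tanh (X t i))) - Y t i * L.mulVec (X t) i := by
        intro i _
        simp only [hD, Pi.neg_apply, Pi.add_apply, Pi.smul_apply, smul_eq_mul]
        ring
      rw [Finset.sum_congr rfl expand, Finset.sum_sub_distrib, Finset.sum_neg_distrib,
        ← Finset.mul_sum]
    have hLX : L.mulVec (X t) = L.mulVec (Y t) := by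
      have hx : X t = Y t + fun _ => (∑ j, X t j) / n := by
        funext i; simp [hYdef]
      rw [hx, Matrix.mulVec_add]
      have hconst : L.mulVec (fun _ : Fin n => (∑ j, X t j) / n) = 0 := by
        have hc' : (fun _ : Fin n => (∑ j, X t j) / n)
            = ((∑ j, X t j) / n) • (fun _ : Fin n => (1:ℝ)) := by
          funext i; simp
        rw [hc', Matrix.mulVec_smul, hL1, smul_zero]
      rw [hconst, add_zero]
    have hA : 0 ≤ ∑ i, Y t i * Real.tanh (X t i) :=
      proj_tanh_nonneg n (X t) ((∑ j, X t j) / n) hsum0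
    have hB : lamMinus * f t ≤ ∑ i, Y t i * L.mulVec (X t) i := by
      rw [hLX]; exact hgap (Y t) hsum0
    have hcA : 0 ≤ c * ∑ i, Y t i * Real.tanh (X t i) := mul_nonneg hc hA
    rw [hg1, hsplit]
    linarith
  intro T hT
  have hcont : ContinuousOn f (Icc 0 T) :=
    fun s hs => ((hderiv s hs.1).continuousAt).continuousWithinAt
  have hf' : ∀ x ∈ Ico 0 T, ∀ r, g x < r →
      ∃ᶠ z in 𝓝[>] x, (z - x)⁻¹ * (f z - f x) < r := by
    intro x hx r hr
    have hd : HasDerivWithinAt f (g x) (Ioi x) x :=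
      (hderiv x hx.1).hasDerivWithinAt
    have hslope := hasDerivWithinAt_iff_tendsto_slope.1 hd
    have hdiff : Ioi x \ {x} = Ioi x := Set.diff_singleton_eq_self (by simp)
    rw [hdiff] at hslope
    have hev : ∀ᶠ z in 𝓝[>] x, slope f x z < r :=
      hslope (Iio_mem_nhds hr)
    apply Filter.Eventually.frequently
    filter_upwards [hev] with z hz
    rwa [slope_def_field, div_eq_inv_mul] at hz
  have hmain := le_gronwallBound_of_liminf_deriv_right_le hcont hf' le_rfl
    (fun x hx => key x hx.1) T (right_mem_Icc.2 hT)
  rw [gronwallBound_ε0, sub_zero] at hmain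
  calc f T ≤ f 0 * Real.exp (-(2 * lamMinus) * T) := hmain
    _ = Real.exp (-(2 * lamMinus * T)) * f 0 := by rw [neg_mul, mul_assoc, mul_comm]
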